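/- Let L be a locally compact Hausdorff topological group with left Haar measure μ, M a compact open subgroup with μ(M) = 1, σ : M → ℂ a continuous group homomorphism with |σ(m)| = 1 for all m ∈ M, and p : L → ℂ given by p(y) = σ(y) for y ∈ M, p(y) = 0 otherwise. Suppose x ∈ L satisfies x⁻¹Mx ⊆ M and σ(x⁻¹hx) = σ(h) for all h ∈ M. Define q : L → ℂ by q(y) = μ(x⁻¹Mx)⁻¹ · σ(xyx⁻¹) for y ∈ x⁻¹Mx and q(y) = 0 otherwise. Then q dominates p as a projection: for every z ∈ L, ∫_L q(y) p(y⁻¹z) dμ(y) = p(z) and ∫_L p(y) q(y⁻¹z) dμ(y) = p(z). -/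

import Mathlib

open MeasureTheory

/-- Let `L` be a locally compact Hausdorff group with left Haar measure
`μ`, `M` compact open with `μ M = 1`, `σ : M → ℂ` a continuous unimodular character, and
`p = χ_M σ`.  Suppose `x ∈ L` satisfies `x⁻¹ M x ⊆ M` and `σ (x⁻¹ h x) = σ h` for all
`h ∈ M`.  Let `q` be supported on `x⁻¹ M x` with `q y = μ(x⁻¹ M x)⁻¹ σ(x y x⁻¹)` there.
Then `q ⋆ p = p = p ⋆ q`, i.e. `q` dominates `p` as a projection. -/
theorem stmt_15 {L : Type*} [Group L] [TopologicalSpace L] [IsTopologicalGroup L]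
    [LocallyCompactSpace L] [T2Space L] [MeasurableSpace L] [BorelSpace L]
    (μ : Measure L) [μ.IsHaarMeasure]
    (M : Subgroup L) (hMc : IsCompact (M : Set L)) (hMo : IsOpen (M : Set L))
    (hμM : μ (M : Set L) = 1)
    (σ : M →* ℂ) (hσc : Continuous σ) (hσu : ∀ m : M, ‖σ m‖ = 1)
    (p : L → ℂ)
    (hp : ∀ y : L, (∀ h : y ∈ M, p y = σ ⟨y, h⟩) ∧ (y ∉ M → p y = 0))
    (x : L)
    (hx1 : ∀ m ∈ M, x⁻¹ * m * x ∈ M)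
    (hx2 : ∀ (h : L) (hh : h ∈ M) (hc : x⁻¹ * h * x ∈ M), σ ⟨x⁻¹ * h * x, hc⟩ = σ ⟨h, hh⟩)
    (q : L → ℂ)
    (hq : ∀ y : L,
      (∀ h : x * y * x⁻¹ ∈ M,
        q y = (((μ {g : L | x * g * x⁻¹ ∈ M}).toReal : ℂ))⁻¹ * σ ⟨x * y * x⁻¹, h⟩) ∧
      (x * y * x⁻¹ ∉ M → q y = 0)) :
    ∀ z : L, (∫ y, q y * p (y⁻¹ * z) ∂μ = p z) ∧ (∫ y, p y * q (y⁻¹ * z) ∂μ = p z) := by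

  intro z
  set S : Set L := {g : L | x * g * x⁻¹ ∈ M} with hSdef
  have hScont : Continuous (fun g : L => x * g * x⁻¹) := by continuity
  have hSopen : IsOpen S := hMo.preimage hScont
  have hSmeas : MeasurableSet S := hSopen.measurableSet
  have hSim : S = (fun m : L => x⁻¹ * m * x) '' (M : Set L) := by
    ext g
    constructor
    · intro hg
      exact ⟨x * g * x⁻¹, hg, by group⟩
    · rintro ⟨m, hm, rfl⟩
      show x * (x⁻¹ * m * x) * x⁻¹ ∈ M
      have e : x * (x⁻¹ * m * x) * x⁻¹ = m := by group
      rw [e]; exact hm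
  have hScompact : IsCompact S := by
    rw [hSim]
    exact hMc.image (by continuity)
  have hSone : (1 : L) ∈ S := by
    show x * 1 * x⁻¹ ∈ M
    have e : x * 1 * x⁻¹ = 1 := by group
    rw [e]; exact M.one_mem
  have hSpos : μ S ≠ 0 := (hSopen.measure_pos μ ⟨1, hSone⟩).ne'
  have hSfin : μ S ≠ ⊤ := hScompact.measure_lt_top.ne
  have hc0 : (μ S).toReal ≠ 0 := ENNReal.toReal_ne_zero.mpr ⟨hSpos, hSfin⟩
  have hcC : (((μ S).toReal : ℝ) : ℂ) ≠ 0 := by exact_mod_cast hc0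
  have hSsub : ∀ g ∈ S, g ∈ M := by
    intro g hg
    have h1 := hx1 _ hg
    have e : x⁻¹ * (x * g * x⁻¹) * x = g := by group
    rwa [e] at h1
  have key : ∀ (g : L) (hg : x * g * x⁻¹ ∈ M) (hg' : g ∈ M),
      σ ⟨x * g * x⁻¹, hg⟩ = σ ⟨g, hg'⟩ := by
    intro g hg hg'
    have hc : x⁻¹ * (x * g * x⁻¹) * x ∈ M := by
      have e : x⁻¹ * (x * g * x⁻¹) * x = g := by group
      rw [e]; exact hg'
    have h2 := hx2 (x * g * x⁻¹) hg hc
    have e2 : (⟨x⁻¹ * (x * g * x⁻¹) * x, hc⟩ : M) = ⟨g, hg'⟩ := Subtype.ext (show x⁻¹ * (x * g * x⁻¹) * x = g by group)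
    rw [e2] at h2
    exact h2.symm
  by_cases hz : z ∈ M
  · have hpz : p z = σ ⟨z, hz⟩ := (hp z).1 hz
    constructor
    · have heq : (fun y => q y * p (y⁻¹ * z))
          = S.indicator (fun _ => ((((μ S).toReal : ℝ) : ℂ))⁻¹ * σ ⟨z, hz⟩) := by
        funext y
        by_cases hy : x * y * x⁻¹ ∈ M
        · have hyS : y ∈ S := hy
          have hyM : y ∈ M := hSsub y hyS
          have hyz : y⁻¹ * z ∈ M := M.mul_mem (M.inv_mem hyM) hz
          have e3 : (⟨y, hyM⟩ * ⟨y⁻¹ * z, hyz⟩ : M) = ⟨z, hz⟩ := Subtype.ext (show y * (y⁻¹ * z) = z by group)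
          rw [Set.indicator_of_mem hyS, (hq y).1 hy, (hp (y⁻¹ * z)).1 hyz,
            key y hy hyM, mul_assoc, ← map_mul, e3]
        · have hyS : y ∉ S := hy
          rw [Set.indicator_of_notMem hyS, (hq y).2 hy, zero_mul]
      rw [heq, integral_indicator_const _ hSmeas, measureReal_def, hpz, Complex.real_smul,
        ← mul_assoc, mul_inv_cancel₀ hcC, one_mul]
    · have hT : ∀ y : L, x * (y⁻¹ * z) * x⁻¹ ∈ M ↔ z⁻¹ * y ∈ S := by
        intro y
        constructor
        · intro h
          show x * (z⁻¹ * y) * x⁻¹ ∈ M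
          have e : x * (z⁻¹ * y) * x⁻¹ = (x * (y⁻¹ * z) * x⁻¹)⁻¹ := by group
          rw [e]; exact M.inv_mem h
        · intro h
          have h' : x * (z⁻¹ * y) * x⁻¹ ∈ M := h
          have e : x * (y⁻¹ * z) * x⁻¹ = (x * (z⁻¹ * y) * x⁻¹)⁻¹ := by group
          rw [e]; exact M.inv_mem h'
      have hTmeas : MeasurableSet ((fun y : L => z⁻¹ * y) ⁻¹' S) :=
        (hSopen.preimage (continuous_const.mul continuous_id)).measurableSet
      have heq : (fun y => p y * q (y⁻¹ * z))
          = ((fun y : L => z⁻¹ * y) ⁻¹' S).indicator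
              (fun _ => ((((μ S).toReal : ℝ) : ℂ))⁻¹ * σ ⟨z, hz⟩) := by
        funext y
        by_cases hy : x * (y⁻¹ * z) * x⁻¹ ∈ M
        · have hyT : y ∈ (fun y : L => z⁻¹ * y) ⁻¹' S := (hT y).1 hy
          have hyzS : y⁻¹ * z ∈ S := hy
          have hyzM : y⁻¹ * z ∈ M := hSsub _ hyzS
          have hyM : y ∈ M := by
            have := M.mul_mem hz (M.inv_mem hyzM)
            have e : z * (y⁻¹ * z)⁻¹ = y := by group
            rwa [e] at this
          have e3 : (⟨y, hyM⟩ * ⟨y⁻¹ * z, hyzM⟩ : M) = ⟨z, hz⟩ := Subtype.ext (show y * (y⁻¹ * z) = z by group)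
          rw [Set.indicator_of_mem hyT, (hp y).1 hyM, (hq (y⁻¹ * z)).1 hy,
            key _ hy hyzM, mul_left_comm, ← map_mul, e3]
        · have hyT : y ∉ (fun y : L => z⁻¹ * y) ⁻¹' S := fun h => hy ((hT y).2 h)
          rw [Set.indicator_of_notMem hyT, (hq (y⁻¹ * z)).2 hy, mul_zero]
      rw [heq, integral_indicator_const _ hTmeas, measureReal_def,
        measure_preimage_mul μ z⁻¹ S, hpz, Complex.real_smul,
        ← mul_assoc, mul_inv_cancel₀ hcC, one_mul]
  · have hpz : p z = 0 := (hp z).2 hz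
    constructor
    · have heq : (fun y => q y * p (y⁻¹ * z)) = fun _ => (0 : ℂ) := by
        funext y
        by_cases hy : x * y * x⁻¹ ∈ M
        · have hyM : y ∈ M := hSsub y hy
          have hyz : y⁻¹ * z ∉ M := by
            intro h
            apply hz
            have := M.mul_mem hyM h
            have e : y * (y⁻¹ * z) = z := by group
            rwa [e] at this
          rw [(hp (y⁻¹ * z)).2 hyz, mul_zero]
        · rw [(hq y).2 hy, zero_mul]
      rw [heq, hpz, integral_zero]
    · have heq : (fun y => p y * q (y⁻¹ * z)) = fun _ => (0 : ℂ) := by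
        funext y
        by_cases hy : x * (y⁻¹ * z) * x⁻¹ ∈ M
        · have hyzM : y⁻¹ * z ∈ M := hSsub _ hy
          have hyM : y ∉ M := by
            intro h
            apply hz
            have := M.mul_mem h hyzM
            have e : y * (y⁻¹ * z) = z := by group
            rwa [e] at this
          rw [(hp y).2 hyM, zero_mul]
        · rw [(hq (y⁻¹ * z)).2 hy, mul_zero]
      rw [heq, hpz, integral_zero]
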